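/- Let p be a prime number and ℤ_p the ring of p-adic integers. Let P be a finitely generated free ℤ_p-module, f : P → P a ℤ_p-linear map, and Q an arbitrary ℤ_p-module. Let e denote the cardinality of the torsion submodule of the cokernel P / f(P) (which is finite since P is finitely generated over ℤ_p). Suppose κ lies in the kernel of f ⊗ id_Q : P ⊗_{ℤ_p} Q → P ⊗_{ℤ_p} Q and also κ ∈ e · (P ⊗_{ℤ_p} Q). Then there exists an element κ′ in the image of the natural map (ker f) ⊗_{ℤ_p} Q → P ⊗_{ℤ_p} Q such that κ − κ′ ∈ p · (P ⊗_{ℤ_p} Q); that is, the image of κ in (P ⊗_{ℤ_p} Q) ⊗_ℤ ℤ/pℤ lies in the image of (ker f) ⊗_{ℤ_p} Q ⊗_ℤ ℤ/pℤ. -/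

import Mathlib

open TensorProduct

section Coord
variable {R : Type*} [CommRing R] {M Q : Type*} [AddCommGroup M] [Module R M]
  [AddCommGroup Q] [Module R Q] {ι : Type*} [DecidableEq ι]

noncomputable def coordEquiv (b : Module.Basis ι R M) (Q : Type*) [AddCommGroup Q] [Module R Q] :
    M ⊗[R] Q ≃ₗ[R] (ι →₀ Q) :=
  (TensorProduct.congr b.repr (LinearEquiv.refl R Q)).trans (TensorProduct.finsuppScalarLeft R Q ι)

lemma coordEquiv_tmul (b : Module.Basis ι R M) (x : M) (q : Q) (i : ι) :
    coordEquiv b Q (x ⊗ₜ q) i = b.repr x i • q := by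
  simp [coordEquiv, TensorProduct.finsuppScalarLeft_apply_tmul_apply]

lemma coordEquiv_symm_single (b : Module.Basis ι R M) (i : ι) (q : Q) :
    (coordEquiv b Q).symm (Finsupp.single i q) = b i ⊗ₜ q := by
  simp [coordEquiv, TensorProduct.finsuppScalarLeft_symm_apply_single]

lemma eq_sum_coord [Fintype ι] (b : Module.Basis ι R M) (z : M ⊗[R] Q) :
    z = ∑ i, b i ⊗ₜ (coordEquiv b Q z i) := by
  conv_lhs => rw [← LinearEquiv.symm_apply_apply (coordEquiv b Q) z]
  have : (coordEquiv b Q z : ι →₀ Q) = ∑ i, Finsupp.single i (coordEquiv b Q z i) := by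
    ext j
    rw [Finsupp.finset_sum_apply]
    rw [Finset.sum_eq_single j (fun i _ hij => Finsupp.single_eq_of_ne hij.symm) (by simp)]
    simp
  conv_lhs => rw [this]
  rw [map_sum]
  exact Finset.sum_congr rfl fun i _ => coordEquiv_symm_single b i _

end Coord

/-- Let `p` be a prime and `ℤ_p` the ring of `p`-adic integers.  Let `P` be a finitely
generated free `ℤ_p`-module, `f : P → P` a `ℤ_p`-linear map, and `Q` an arbitrary
`ℤ_p`-module.  Let `e` be the cardinality of the torsion submodule of the cokernel
`P / f(P)` (which is finite since `P` is finitely generated over `ℤ_p`).  Suppose `κ`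
lies in the kernel of `f ⊗ id_Q : P ⊗_{ℤ_p} Q → P ⊗_{ℤ_p} Q` and also
`κ ∈ e · (P ⊗_{ℤ_p} Q)`.  Then there exists an element `κ′` in the image of the natural
map `(ker f) ⊗_{ℤ_p} Q → P ⊗_{ℤ_p} Q` such that `κ − κ′ ∈ p · (P ⊗_{ℤ_p} Q)`; that is,
the image of `κ` in `(P ⊗_{ℤ_p} Q) ⊗_ℤ ℤ/pℤ` lies in the image of
`(ker f) ⊗_{ℤ_p} Q ⊗_ℤ ℤ/pℤ`. -/
theorem sub_mem_smul_of_mem_ker_rTensor_of_card_smul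
    (p : ℕ) [Fact p.Prime]
    (P : Type*) [AddCommGroup P] [Module ℤ_[p] P]
    [Module.Free ℤ_[p] P] [Module.Finite ℤ_[p] P]
    (Q : Type*) [AddCommGroup Q] [Module ℤ_[p] Q]
    (f : P →ₗ[ℤ_[p]] P) (e : ℕ)
    (he : Nat.card (Submodule.torsion ℤ_[p] (P ⧸ LinearMap.range f)) = e)
    (κ : P ⊗[ℤ_[p]] Q) (hκ : LinearMap.rTensor Q f κ = 0)
    (hκe : ∃ y : P ⊗[ℤ_[p]] Q, κ = (e : ℤ_[p]) • y) :
    ∃ κ' ∈ LinearMap.range (LinearMap.rTensor Q (LinearMap.ker f).subtype),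
      ∃ y : P ⊗[ℤ_[p]] Q, κ - κ' = (p : ℤ_[p]) • y := by
  classical
  obtain ⟨y, rfl⟩ := hκe
  rcases eq_or_ne e 0 with rfl | he0
  · refine ⟨0, Submodule.zero_mem _, 0, ?_⟩
    push_cast
    simp
  set N : Submodule ℤ_[p] P := LinearMap.range f with hNdef
  obtain ⟨n, bP, bN, ε, a, hsnf⟩ := N.smithNormalForm (Module.Free.chooseBasis ℤ_[p] P)
  set κ : P ⊗[ℤ_[p]] Q := (e : ℤ_[p]) • y with hκdef
  -- a k ≠ 0
  have ha0 : ∀ k, a k ≠ 0 := by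
    intro k hk
    have h := hsnf k
    rw [hk, zero_smul] at h
    exact bN.ne_zero k (Subtype.ext h)
  -- a k ∣ e
  have hdvd : ∀ k, a k ∣ (e : ℤ_[p]) := by
    intro k
    have htor : (Submodule.Quotient.mk (bP (ε k)) : P ⧸ N) ∈
        Submodule.torsion ℤ_[p] (P ⧸ N) := by
      refine ⟨⟨a k, mem_nonZeroDivisors_of_ne_zero (ha0 k)⟩, ?_⟩
      have : a k • (Submodule.Quotient.mk (bP (ε k)) : P ⧸ N) =
          Submodule.Quotient.mk (a k • bP (ε k)) := rfl
      rw [Submonoid.smul_def, this, ← hsnf k, Submodule.Quotient.mk_eq_zero]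
      exact (bN k).2
    have hesmul : (e : ℤ_[p]) • bP (ε k) ∈ N := by
      have h1 : e • (⟨_, htor⟩ : Submodule.torsion ℤ_[p] (P ⧸ N)) = 0 := by
        rw [← he]
        exact card_nsmul_eq_zero'
      have h2 : (e : ℤ_[p]) • (Submodule.Quotient.mk (bP (ε k)) : P ⧸ N) = 0 := by
        have h3 := congrArg Subtype.val h1
        rw [AddSubmonoidClass.coe_nsmul] at h3
        rw [Nat.cast_smul_eq_nsmul]
        exact h3
      rwa [← Submodule.Quotient.mk_smul, Submodule.Quotient.mk_eq_zero] at h2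
    set w : N := ⟨_, hesmul⟩ with hw
    have hrepr : (e : ℤ_[p]) = bN.repr w k * a k := by
      have h1 : (w : P) = ∑ j, (bN.repr w j * a j) • bP (ε j) := by
        conv_lhs => rw [← bN.sum_repr w]
        push_cast [Submodule.coe_sum]
        exact Finset.sum_congr rfl fun j _ => by rw [hsnf j, smul_smul]
      have h2 : bP.repr (w : P) (ε k) = bN.repr w k * a k := by
        rw [h1, map_sum, Finsupp.finset_sum_apply]
        rw [Finset.sum_eq_single k (fun j _ hjk => ?_) (by simp)]
        · simp
        · rw [map_smul, Finsupp.smul_apply, bP.repr_self,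
            Finsupp.single_eq_of_ne (fun h => hjk (ε.injective h.symm)), smul_zero]
      rw [← h2, hw]
      simp
    exact ⟨bN.repr w k, by rw [hrepr, mul_comm]⟩
  -- tensor part
  set f' : P →ₗ[ℤ_[p]] N := f.rangeRestrict with hf'
  have hcomp : N.subtype ∘ₗ f' = f :=
    LinearMap.subtype_comp_codRestrict f N (LinearMap.mem_range_self f)
  set z : N ⊗[ℤ_[p]] Q := f'.rTensor Q κ with hzdef
  have hz0 : N.subtype.rTensor Q z = 0 := by
    rw [hzdef, ← LinearMap.comp_apply, ← LinearMap.rTensor_comp, hcomp]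
    exact hκ
  set q : Fin n →₀ Q := coordEquiv bN Q z with hqdef
  have hzsum : z = ∑ k, bN k ⊗ₜ q k := eq_sum_coord bN z
  have haq : ∀ k, a k • q k = 0 := by
    intro k
    have h0 : (0 : P ⊗[ℤ_[p]] Q) = ∑ j, bP (ε j) ⊗ₜ (a j • q j) := by
      rw [← hz0, hzsum, map_sum]
      refine Finset.sum_congr rfl fun j _ => ?_
      rw [LinearMap.rTensor_tmul, Submodule.coe_subtype, hsnf j, smul_tmul]
    have h1 := congrArg (fun t => coordEquiv bP Q t (ε k)) h0
    simp only [map_zero, Finsupp.coe_zero, Pi.zero_apply, map_sum,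
      Finsupp.finset_sum_apply] at h1
    rw [Finset.sum_eq_single k (fun j _ hjk => ?_) (by simp)] at h1
    · rw [coordEquiv_tmul, bP.repr_self, Finsupp.single_eq_same, one_smul] at h1
      exact h1.symm
    · rw [coordEquiv_tmul, bP.repr_self,
        Finsupp.single_eq_of_ne (fun h => hjk (ε.injective h.symm)), zero_smul]
  set z₁ : N ⊗[ℤ_[p]] Q := f'.rTensor Q y with hz₁def
  have hq_e : ∀ k, q k = (e : ℤ_[p]) • coordEquiv bN Q z₁ k := by
    intro k
    rw [hqdef, hzdef, hκdef, map_smul, map_smul, Finsupp.smul_apply]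
  have hpq : ∀ k, ∃ r : Q, q k = (p : ℤ_[p]) • r := by
    intro k
    by_cases hu : IsUnit (a k)
    · obtain ⟨u, hu⟩ := hu
      refine ⟨0, ?_⟩
      have h := haq k
      have h' := congrArg (fun t => (↑u⁻¹ : ℤ_[p]) • t) h
      simp only [smul_smul, smul_zero] at h'
      rw [← hu, Units.inv_mul, one_smul] at h'
      rw [h', smul_zero]
    · have hpa : (p : ℤ_[p]) ∣ a k :=
        (PadicInt.norm_lt_one_iff_dvd _).1 (PadicInt.not_isUnit_iff.1 hu)
      obtain ⟨c, hc⟩ := hpa.trans (hdvd k)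
      exact ⟨c • coordEquiv bN Q z₁ k, by rw [hq_e k, hc, mul_smul]⟩
  choose r hr using hpq
  set z₂ : N ⊗[ℤ_[p]] Q := ∑ k, bN k ⊗ₜ r k with hz₂def
  have hz_p : z = (p : ℤ_[p]) • z₂ := by
    rw [hzsum, hz₂def, Finset.smul_sum]
    refine Finset.sum_congr rfl fun k _ => ?_
    rw [hr k, tmul_smul]
  -- section of f'
  have hsurj : Function.Surjective f' := f.surjective_rangeRestrict
  choose sec hsec using fun k => hsurj (bN k)
  set s : N →ₗ[ℤ_[p]] P := bN.constr ℤ_[p] sec with hsdef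
  have hsec' : f' ∘ₗ s = LinearMap.id :=
    bN.ext fun k => by rw [LinearMap.comp_apply, hsdef, bN.constr_basis, hsec k,
      LinearMap.id_apply]
  set g : P →ₗ[ℤ_[p]] P := LinearMap.id - s ∘ₗ f' with hgdef
  have hmem : ∀ x : P, g x ∈ LinearMap.ker f := by
    intro x
    rw [LinearMap.mem_ker, hgdef, LinearMap.sub_apply, LinearMap.id_apply,
      LinearMap.comp_apply, map_sub]
    have h2 : f' (s (f' x)) = f' x := by
      have := LinearMap.congr_fun hsec' (f' x)
      rwa [LinearMap.comp_apply, LinearMap.id_apply] at this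
    have h3 := LinearMap.congr_fun hcomp (s (f' x))
    have h4 := LinearMap.congr_fun hcomp x
    rw [LinearMap.comp_apply, Submodule.coe_subtype] at h3 h4
    rw [← h3, h2, h4, sub_self]
  set π : P →ₗ[ℤ_[p]] (LinearMap.ker f) :=
    g.codRestrict (LinearMap.ker f) hmem with hπdef
  refine ⟨(LinearMap.ker f).subtype.rTensor Q (π.rTensor Q κ), ⟨_, rfl⟩,
    s.rTensor Q z₂, ?_⟩
  have h5 : (LinearMap.ker f).subtype ∘ₗ π = LinearMap.id - s ∘ₗ f' :=
    LinearMap.subtype_comp_codRestrict _ _ hmem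
  have h6 : (LinearMap.ker f).subtype.rTensor Q (π.rTensor Q κ) =
      κ - (s ∘ₗ f').rTensor Q κ := by
    rw [← LinearMap.comp_apply, ← LinearMap.rTensor_comp, h5, LinearMap.rTensor_sub,
      LinearMap.sub_apply, LinearMap.rTensor_id, LinearMap.id_apply]
  rw [h6, sub_sub_cancel, LinearMap.rTensor_comp, LinearMap.comp_apply, ← hzdef, hz_p,
    map_smul]
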